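/- For every p ∈ (0,1), τ > 0 and integer M ≥ 0 there exists a constant C_{p,τ,M} > 0 such that the following holds: for every choice of complex coefficients f̃_{−M},…,f̃_M, setting f(θ) = Σ_{m=−M}^{M} f̃_m ψ_m(θ), one has for all integers n ≥ 1 and all k, l ∈ {0,…,N−1} (with N = 2^n) the bound |Σ_{m=−M}^{M} f̃_m (Ã_{m,n})_{kl} − f(θ_l) δ_{kl}| ≤ (C_{p,τ,M} / N^{1−p}) (Σ_{m=−M}^{M} |f̃_m|^2)^{1/2}. -/

import Mathlib

/-! Statement 2: residual bound for bandlimited observables. -/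

noncomputable section

namespace QECD

/-- The index set `J_n = {−N/2,…,−1,1,…,N/2}` with `N = 2^n`. -/
def Jn (n : ℕ) : Finset ℤ := (Finset.Icc (-(2 ^ (n - 1)) : ℤ) (2 ^ (n - 1))).erase 0

/-- The order-preserving enumeration `o : J_n → {0,…,N−1}`. -/
def oIdx (n : ℕ) (j : ℤ) : ℤ := if j < 0 then j + 2 ^ (n - 1) else j + 2 ^ (n - 1) - 1

/-- Scaled Fourier basis function `ψ_m(θ) = e^{−τ|m|^p/2} e^{imθ}`. -/
def psi (p τ : ℝ) (m : ℤ) (θ : ℝ) : ℂ :=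
  (Real.exp (-(τ * |(m : ℝ)| ^ p) / 2) : ℂ) * Complex.exp (Complex.I * (m : ℂ) * (θ : ℂ))

/-- Structure constants `c_{mj} = e^{−τ(|m|^p + |j|^p − |m+j|^p)/2}`. -/
def cst (p τ : ℝ) (m j : ℤ) : ℝ :=
  Real.exp (-(τ * (|(m : ℝ)| ^ p + |(j : ℝ)| ^ p - |((m + j : ℤ) : ℝ)| ^ p)) / 2)

/-- Truncated structure constants `c^{(n)}_{mj}`. -/
def cstN (p τ : ℝ) (n : ℕ) (m j : ℤ) : ℝ :=
  if m + j ∈ Jn n then cst p τ m j else 0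

/-- Matrix elements `(Ã_{m,n})_{kl}` of the QFT-rotated multiplication operator. -/
def Atilde (p τ : ℝ) (n : ℕ) (m : ℤ) (k l : ℕ) : ℂ :=
  (1 / (2 ^ n : ℂ)) * ∑ j ∈ Jn n,
    Complex.exp (2 * (Real.pi : ℂ) * Complex.I *
        ((((k : ℤ) - (l : ℤ)) * oIdx n j + (k : ℤ) * m : ℤ) : ℂ) / (2 ^ n : ℂ)) *
      (cstN p τ n m j : ℂ)

/-- `w p t = |t|^p`. -/
def w (p : ℝ) (t : ℤ) : ℝ := |(t : ℝ)| ^ p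

lemma w_nonneg (p : ℝ) (t : ℤ) : 0 ≤ w p t := Real.rpow_nonneg (abs_nonneg _) p

lemma w_neg (p : ℝ) (t : ℤ) : w p (-t) = w p t := by
  unfold w; push_cast; rw [abs_neg]

lemma w_mono {p : ℝ} (hp : 0 ≤ p) {a b : ℤ} (h : |a| ≤ |b|) : w p a ≤ w p b := by
  unfold w
  apply Real.rpow_le_rpow (abs_nonneg _) _ hp
  exact_mod_cast (by exact_mod_cast h : (|a| : ℝ) ≤ (|b| : ℝ))

lemma real_rpow_subadd {p : ℝ} (hp0 : 0 ≤ p) (hp1 : p ≤ 1) {x y : ℝ} (hx : 0 ≤ x)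
    (hy : 0 ≤ y) : (x + y) ^ p ≤ x ^ p + y ^ p := by
  have h := NNReal.coe_le_coe.mpr (NNReal.rpow_add_le_add_rpow x.toNNReal y.toNNReal hp0 hp1)
  simpa [NNReal.coe_rpow, NNReal.coe_add, Real.coe_toNNReal x hx,
    Real.coe_toNNReal y hy] using h

lemma w_subadd {p : ℝ} (hp0 : 0 ≤ p) (hp1 : p ≤ 1) (a b : ℤ) :
    w p (a + b) ≤ w p a + w p b := by
  have h1 : w p (a + b) ≤ (|(a:ℝ)| + |(b:ℝ)|) ^ p := by
    unfold w
    apply Real.rpow_le_rpow (abs_nonneg _) _ hp0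
    push_cast
    exact abs_add_le _ _
  exact h1.trans (real_rpow_subadd hp0 hp1 (abs_nonneg _) (abs_nonneg _))

lemma abs_w_sub {p : ℝ} (hp0 : 0 ≤ p) (hp1 : p ≤ 1) (m j : ℤ) :
    |w p (m + j) - w p j| ≤ w p m := by
  rw [abs_sub_le_iff]
  constructor
  · have := w_subadd hp0 hp1 m j; linarith
  · have h := w_subadd hp0 hp1 (-m) (m + j)
    rw [w_neg, (by ring : -m + (m + j) = j)] at h
    linarith

lemma abs_exp_sub_one_le {x X : ℝ} (h : |x| ≤ X) :
    |Real.exp x - 1| ≤ Real.exp X * |x| := by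
  rcases le_or_gt 0 x with hx | hx
  · rw [abs_of_nonneg hx, abs_of_nonneg (by nlinarith [Real.add_one_le_exp x] : (0:ℝ) ≤ Real.exp x - 1)]
    have h1 := Real.add_one_le_exp (-x)
    have h2 : Real.exp x * Real.exp (-x) = 1 := by rw [← Real.exp_add]; simp
    have h3 : Real.exp x ≤ Real.exp X := Real.exp_le_exp.2 ((le_abs_self x).trans h)
    nlinarith [Real.exp_pos x]
  · rw [abs_of_neg hx] at *
    have h1 := Real.add_one_le_exp x
    have h4 : 1 ≤ Real.exp X := Real.one_le_exp (by linarith)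
    rw [abs_of_nonpos (by nlinarith [Real.exp_lt_one_iff.mpr hx] : Real.exp x - 1 ≤ 0)]
    nlinarith [Real.exp_pos x]


lemma two_pow_eq {n : ℕ} (hn : 1 ≤ n) : (2:ℤ) ^ n = 2 * 2 ^ (n - 1) := by
  conv_lhs => rw [show n = (n-1)+1 by omega]
  ring

lemma mem_Jn {n : ℕ} {j : ℤ} : j ∈ Jn n ↔ j ≠ 0 ∧ -(2^(n-1)) ≤ j ∧ j ≤ 2^(n-1) := by
  simp [Jn, Finset.mem_erase, Finset.mem_Icc, and_assoc]

lemma card_Jn {n : ℕ} (hn : 1 ≤ n) : (Jn n).card = 2 ^ n := by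
  have h : (0:ℤ) ∈ Finset.Icc (-(2 ^ (n - 1)) : ℤ) (2 ^ (n - 1)) := by
    rw [Finset.mem_Icc]
    have : (0:ℤ) ≤ 2^(n-1) := by positivity
    omega
  have h2 : (0:ℤ) < 2 ^ (n-1) := by positivity
  have h3 : ((2^n : ℕ) : ℤ) = 2 * 2 ^ (n-1) := by push_cast [two_pow_eq hn]; ring
  rw [Jn, Finset.card_erase_of_mem h, Int.card_Icc]
  omega

lemma sum_oIdx {n : ℕ} (hn : 1 ≤ n) (F : ℤ → ℂ) :
    ∑ j ∈ Jn n, F (oIdx n j) = ∑ r ∈ Finset.range (2 ^ n), F (r : ℤ) := by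
  have h3 := two_pow_eq hn
  have h2 : (0:ℤ) < 2 ^ (n-1) := by positivity
  have hcast : ((2^n : ℕ) : ℤ) = (2:ℤ)^n := by push_cast; ring
  apply Finset.sum_nbij'
    (i := fun j => (oIdx n j).toNat)
    (j := fun r => if (r:ℤ) < 2^(n-1) then (r:ℤ) - 2^(n-1) else (r:ℤ) + 1 - 2^(n-1))
  · intro a ha
    rw [mem_Jn] at ha
    simp only [Finset.mem_range]
    unfold oIdx
    split <;> omega
  · intro r hr
    simp only [Finset.mem_range] at hr
    have hr' : (r:ℤ) < 2^n := by omega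
    rw [mem_Jn]
    split <;> omega
  · intro a ha
    rw [mem_Jn] at ha
    unfold oIdx
    split <;> split <;> omega
  · intro r hr
    simp only [Finset.mem_range] at hr
    have hr' : (r:ℤ) < 2^n := by omega
    unfold oIdx
    split <;> split <;> omega
  · intro a ha
    rw [mem_Jn] at ha
    congr 1
    unfold oIdx
    split <;> omega

lemma dft_zero {n : ℕ} (hn : 1 ≤ n) {d : ℤ} (hd : d ≠ 0) (hd2 : |d| < 2 ^ n) :
    ∑ j ∈ Jn n, Complex.exp (2 * (Real.pi:ℂ) * Complex.I * d * oIdx n j / 2 ^ n) = 0 := by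
  have key := sum_oIdx hn (fun t => Complex.exp (2 * (Real.pi:ℂ) * Complex.I * d * t / 2 ^ n))
  rw [key]
  set ζ : ℂ := Complex.exp (2 * (Real.pi:ℂ) * Complex.I * d / 2 ^ n) with hζ
  have hz : ∀ r : ℕ, Complex.exp (2 * (Real.pi:ℂ) * Complex.I * d * (r:ℤ) / 2 ^ n) = ζ ^ r := by
    intro r
    rw [hζ, ← Complex.exp_nat_mul]
    congr 1
    push_cast
    ring
  rw [Finset.sum_congr rfl (fun r _ => hz r)]
  have hζN : ζ ^ (2^n : ℕ) = 1 := by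
    rw [hζ, ← Complex.exp_nat_mul]
    rw [show (2^n : ℕ) * (2 * (Real.pi:ℂ) * Complex.I * d / 2 ^ n) = d * (2 * Real.pi * Complex.I) by
      push_cast
      field_simp]
    exact Complex.exp_int_mul_two_pi_mul_I d
  have hζ1 : ζ ≠ 1 := by
    rw [hζ]
    intro hcon
    rw [Complex.exp_eq_one_iff] at hcon
    obtain ⟨k, hk⟩ := hcon
    have hπ : (Real.pi : ℂ) ≠ 0 := by exact_mod_cast Real.pi_ne_zero
    have h2n : ((2:ℂ))^n ≠ 0 := pow_ne_zero n two_ne_zero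
    have hne : (2 * (Real.pi:ℂ) * Complex.I) ≠ 0 :=
      mul_ne_zero (mul_ne_zero two_ne_zero hπ) Complex.I_ne_zero
    have h1 : (2*(Real.pi:ℂ)*Complex.I) * d = (2*(Real.pi:ℂ)*Complex.I) * (k * 2^n) := by
      field_simp at hk
      linear_combination (2*(Real.pi:ℂ)*Complex.I) * hk
    have : (d : ℂ) = k * 2 ^ n := mul_left_cancel₀ hne h1
    have hdz : d = k * 2 ^ n := by exact_mod_cast this
    rcases eq_or_ne k 0 with rfl | hk0
    · exact hd (by simpa using hdz)
    · have : (2:ℤ)^n ≤ |d| := by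
        rw [hdz, abs_mul, abs_pow]
        calc (2:ℤ)^n = 1 * 2^n := by ring
        _ ≤ |k| * |2|^n := by
            apply mul_le_mul _ _ (by positivity) (abs_nonneg _)
            · exact Int.one_le_abs hk0
            · simp
      omega
  rw [geom_sum_eq hζ1, hζN]
  simp


lemma real_two_pow_eq {n : ℕ} (hn : 1 ≤ n) : (2:ℝ) ^ n = 2 * 2 ^ (n - 1) := by
  conv_lhs => rw [show n = (n-1)+1 by omega]
  ring

lemma sum_B_bound {p : ℝ} (hp : p ∈ Set.Ioo (0:ℝ) 1) (M : ℕ) {n : ℕ} (hn : 1 ≤ n)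
    (hbig : 2*(M:ℤ) + 3 ≤ 2^(n-1)) :
    ∑ j ∈ Jn n, (w p (|j| + M) - w p ((|j| - M) ⊔ 0)) ≤ 4*M*((2:ℝ)^n)^p := by
  set H : ℤ := 2^(n-1) with hH
  have hH0 : (0:ℤ) < H := by positivity
  have hJsplit : Jn n = Finset.Icc (-H) (-1) ∪ Finset.Icc 1 H := by
    ext x
    simp only [mem_Jn, Finset.mem_union, Finset.mem_Icc, ← hH]
    omega
  have hdisj : Disjoint (Finset.Icc (-H) (-1)) (Finset.Icc 1 H) := by
    rw [Finset.disjoint_left]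
    intro a ha hb
    simp only [Finset.mem_Icc] at ha hb
    omega
  rw [hJsplit, Finset.sum_union hdisj]
  have hneg : ∑ j ∈ Finset.Icc (-H) (-1), (w p (|j| + M) - w p ((|j| - M) ⊔ 0))
      = ∑ j ∈ Finset.Icc 1 H, (w p (|j| + M) - w p ((|j| - M) ⊔ 0)) := by
    apply Finset.sum_nbij' (i := fun j => -j) (j := fun j => -j)
    · intro a ha; simp only [Finset.mem_Icc] at *; omega
    · intro a ha; simp only [Finset.mem_Icc] at *; omega
    · intro a _; ring
    · intro a _; ring
    · intro a _; rw [abs_neg]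
  rw [hneg]
  have hcast : ((2*H : ℤ):ℝ) = (2:ℝ)^n := by
    rw [hH, real_two_pow_eq hn]; push_cast; ring
  have core : ∑ j ∈ Finset.Icc 1 H, (w p (|j| + M) - w p ((|j| - M) ⊔ 0))
      ≤ 2*M*((2:ℝ)^n)^p := by
    have habs : ∑ j ∈ Finset.Icc 1 H, (w p (|j| + M) - w p ((|j| - M) ⊔ 0))
        = ∑ j ∈ Finset.Icc 1 H, (w p (j + M) - w p ((j - M) ⊔ 0)) := by
      apply Finset.sum_congr rfl
      intro t ht
      simp only [Finset.mem_Icc] at ht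
      rw [abs_of_pos (by omega : (0:ℤ) < t)]
    rw [habs, Finset.sum_sub_distrib]
    have e1 : ∑ j ∈ Finset.Icc (1:ℤ) H, w p (j + M)
        = ∑ s ∈ Finset.Icc (1+(M:ℤ)) (H+M), w p s := by
      rw [← Finset.map_add_right_Icc 1 H (M:ℤ), Finset.sum_map]
      apply Finset.sum_congr rfl
      intro x _
      rfl
    have e2 : ∑ s ∈ Finset.Icc (1:ℤ) (H-M), w p s
        ≤ ∑ j ∈ Finset.Icc (1:ℤ) H, w p ((j - M) ⊔ 0) := by
      have e2a : ∑ j ∈ Finset.Icc (1+(M:ℤ)) H, w p ((j - M) ⊔ 0)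
          = ∑ s ∈ Finset.Icc (1:ℤ) (H-M), w p s := by
        rw [show Finset.Icc (1+(M:ℤ)) H = Finset.Icc (1+(M:ℤ)) ((H-M)+M) by congr 1; ring,
          ← Finset.map_add_right_Icc 1 (H-M) (M:ℤ), Finset.sum_map]
        apply Finset.sum_congr rfl
        intro s hs
        simp only [Finset.mem_Icc] at hs
        show w p ((s + M - M) ⊔ 0) = w p s
        rw [show s + (M:ℤ) - M = s by ring, max_eq_left (by omega)]
      rw [← e2a]
      apply Finset.sum_le_sum_of_subset_of_nonneg
      · exact Finset.Icc_subset_Icc (by omega) le_rfl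
      · intro i _ _
        exact w_nonneg p _
    have split : Finset.Icc (1+(M:ℤ)) (H+M)
        = Finset.Icc (1+(M:ℤ)) (H-M) ∪ Finset.Icc (H-M+1) (H+M) := by
      ext x
      simp only [Finset.mem_Icc, Finset.mem_union]
      omega
    have dis2 : Disjoint (Finset.Icc (1+(M:ℤ)) (H-M)) (Finset.Icc (H-M+1) (H+M)) := by
      rw [Finset.disjoint_left]
      intro a ha hb
      simp only [Finset.mem_Icc] at ha hb
      omega
    have t1 : ∑ s ∈ Finset.Icc (1+(M:ℤ)) (H-M), w p s
        ≤ ∑ s ∈ Finset.Icc (1:ℤ) (H-M), w p s := by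
      apply Finset.sum_le_sum_of_subset_of_nonneg
      · exact Finset.Icc_subset_Icc (by omega) le_rfl
      · intro i _ _; exact w_nonneg p _
    have t2 : ∑ s ∈ Finset.Icc (H-(M:ℤ)+1) (H+M), w p s ≤ 2*M*((2:ℝ)^n)^p := by
      have hb : ∀ s ∈ Finset.Icc (H-(M:ℤ)+1) (H+M), w p s ≤ ((2:ℝ)^n)^p := by
        intro s hs
        simp only [Finset.mem_Icc] at hs
        have h1 : w p s ≤ w p (2*H) := by
          apply w_mono hp.1.le
          rw [abs_of_pos (by omega : (0:ℤ) < s), abs_of_pos (by omega : (0:ℤ) < 2*H)]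
          omega
        have h2 : w p (2*H) = ((2:ℝ)^n)^p := by
          unfold w
          rw [abs_of_nonneg (by exact_mod_cast (by omega : (0:ℤ) ≤ 2*H)), hcast]
        linarith
      have := Finset.sum_le_card_nsmul _ _ _ hb
      rw [Int.card_Icc] at this
      have hcard : ((H+(M:ℤ)+1 - (H-M+1)).toNat : ℝ) = 2*M := by
        have hnat : ((2*(M:ℤ)).toNat) = 2*M := by omega
        rw [show H+(M:ℤ)+1 - (H-M+1) = 2*M by ring, hnat]
        push_cast
        ring
      rw [nsmul_eq_mul] at this
      calc ∑ s ∈ Finset.Icc (H-(M:ℤ)+1) (H+M), w p s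
          ≤ ((H+(M:ℤ)+1 - (H-M+1)).toNat : ℝ) * ((2:ℝ)^n)^p := this
        _ = 2*M*((2:ℝ)^n)^p := by rw [hcard]
    rw [e1, split, Finset.sum_union dis2]
    linarith
  linarith

lemma card_S {M : ℕ} {m : ℤ} (hm : -(M:ℤ) ≤ m ∧ m ≤ M) {n : ℕ} (hn : 1 ≤ n) :
    ((Jn n).filter (fun j => m + j ∉ Jn n)).card ≤ 2*M+1 := by
  classical
  set H : ℤ := 2^(n-1) with hH
  have hsub : (Jn n).filter (fun j => m + j ∉ Jn n)
      ⊆ insert (-m) (Finset.Icc (H+1-M) H ∪ Finset.Icc (-H) (M-1-H)) := by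
    intro j hj
    simp only [Finset.mem_filter, mem_Jn, Finset.mem_insert, Finset.mem_union,
      Finset.mem_Icc, ← hH] at hj ⊢
    omega
  calc ((Jn n).filter (fun j => m + j ∉ Jn n)).card
      ≤ (insert (-m) (Finset.Icc (H+1-M) H ∪ Finset.Icc (-H) (M-1-H))).card :=
        Finset.card_le_card hsub
    _ ≤ (Finset.Icc (H+1-M) H ∪ Finset.Icc (-H) (M-1-H)).card + 1 :=
        Finset.card_insert_le _ _
    _ ≤ ((Finset.Icc (H+1-M) H).card + (Finset.Icc (-H) (M-1-H)).card) + 1 := by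
        have := Finset.card_union_le (Finset.Icc (H+1-M) H) (Finset.Icc (-H) (M-1-H))
        omega
    _ ≤ 2*M+1 := by
        rw [Int.card_Icc, Int.card_Icc]
        omega

lemma g_le_B {p : ℝ} (hp : p ∈ Set.Ioo (0:ℝ) 1) {M : ℕ} {m : ℤ}
    (hm : -(M:ℤ) ≤ m ∧ m ≤ M) (j : ℤ) :
    |w p (m + j) - w p j| ≤ w p (|j| + M) - w p ((|j| - M) ⊔ 0) := by
  have a1 := abs_add_le m j
  have a2 : abs (|j| + (M:ℤ)) = |j| + M := abs_of_nonneg (by positivity)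
  have a3 : |j| ≤ |m+j| + |m| := by
    have := abs_add_le (m+j) (-m)
    rw [abs_neg, show m+j+-m = j by ring] at this
    exact this
  have a4 : |(|j| - (M:ℤ)) ⊔ 0| = (|j| - M) ⊔ 0 := abs_of_nonneg (le_max_right _ _)
  have am : |m| ≤ (M:ℤ) := abs_le.mpr hm
  have n1 := abs_nonneg (m+j)
  have n2 := abs_nonneg j
  have n3 := abs_nonneg m
  have h1 : w p (m+j) ≤ w p (|j| + M) := w_mono hp.1.le (by omega)
  have h2 : w p ((|j| - M) ⊔ 0) ≤ w p (m+j) := w_mono hp.1.le (by omega)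
  have h3 : w p j ≤ w p (|j| + M) := w_mono hp.1.le (by rw [a2]; omega)
  have h4 : w p ((|j| - M) ⊔ 0) ≤ w p j := w_mono hp.1.le (by rw [a4]; omega)
  rw [abs_sub_le_iff]
  constructor <;> linarith

lemma cst_sub_le {p τ : ℝ} (hp : p ∈ Set.Ioo (0:ℝ) 1) (hτ : 0 < τ) {M : ℕ} {m : ℤ}
    (hm : -(M:ℤ) ≤ m ∧ m ≤ M) {n : ℕ} {j : ℤ} (hmem : m + j ∈ Jn n) :
    |cstN p τ n m j - Real.exp (-(τ * |(m:ℝ)| ^ p) / 2)|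
      ≤ Real.exp (τ * (M:ℝ)^p / 2) * (τ/2 * |w p (m+j) - w p j|) := by
  rw [cstN, if_pos hmem]
  set r : ℝ := Real.exp (-(τ * |(m:ℝ)| ^ p) / 2) with hr
  set x : ℝ := τ * (w p (m+j) - w p j) / 2 with hx
  have hc : cst p τ m j = r * Real.exp x := by
    rw [cst, hr, hx, ← Real.exp_add]
    congr 1
    unfold w
    ring
  have hwm : w p m ≤ (M:ℝ)^p := by
    have h1 : w p m ≤ w p (M:ℤ) := w_mono hp.1.le (by
      rw [abs_of_nonneg (by positivity : (0:ℤ) ≤ (M:ℤ))]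
      exact abs_le.mpr hm)
    have h2 : w p (M:ℤ) = (M:ℝ)^p := by
      unfold w
      rw [abs_of_nonneg (by positivity)]
      norm_num
    linarith
  have hxb : |x| ≤ τ * (M:ℝ)^p / 2 := by
    rw [hx, abs_div, abs_of_pos (by norm_num : (0:ℝ) < 2), abs_mul,
      abs_of_pos hτ]
    have := (abs_w_sub hp.1.le hp.2.le m j).trans hwm
    have h0 : 0 ≤ |w p (m+j) - w p j| := abs_nonneg _
    calc τ * |w p (m + j) - w p j| / 2 ≤ τ * ((M:ℝ)^p) / 2 := by
          gcongr
      _ = τ * (M:ℝ)^p / 2 := by ring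
  have hr1 : r ≤ 1 := by
    rw [hr]
    apply Real.exp_le_one_iff.mpr
    have : (0:ℝ) ≤ τ * |(m:ℝ)| ^ p := by positivity
    linarith
  have hr0 : 0 < r := Real.exp_pos _
  calc |cst p τ m j - r| = |r * Real.exp x - r| := by rw [hc]
    _ = r * |Real.exp x - 1| := by
        rw [show r * Real.exp x - r = r * (Real.exp x - 1) by ring, abs_mul, abs_of_pos hr0]
    _ ≤ 1 * (Real.exp (τ * (M:ℝ)^p / 2) * |x|) := by
        apply mul_le_mul hr1 (abs_exp_sub_one_le hxb) (abs_nonneg _) zero_le_one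
    _ = Real.exp (τ * (M:ℝ)^p / 2) * |x| := by ring
    _ = Real.exp (τ * (M:ℝ)^p / 2) * (τ/2 * |w p (m+j) - w p j|) := by
        rw [hx, abs_div, abs_of_pos (by norm_num : (0:ℝ) < 2), abs_mul, abs_of_pos hτ]
        ring

/-- The per-`m` constant. -/
def C0 (p τ : ℝ) (M : ℕ) : ℝ :=
  (4*(M:ℝ)+6) + (2*(M:ℝ)+1) + 2*τ*Real.exp (τ*(M:ℝ)^p/2)*M

lemma C0_pos {p τ : ℝ} (hτ : 0 < τ) (M : ℕ) : 0 < C0 p τ M := by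
  unfold C0
  have := Real.exp_pos (τ*(M:ℝ)^p/2)
  have : (0:ℝ) ≤ (M:ℝ) := by positivity
  nlinarith [Real.exp_pos (τ*(M:ℝ)^p/2), mul_pos hτ (Real.exp_pos (τ*(M:ℝ)^p/2))]

lemma sum_cst_bound {p τ : ℝ} (hp : p ∈ Set.Ioo (0:ℝ) 1) (hτ : 0 < τ) (M : ℕ) {m : ℤ}
    (hm : -(M:ℤ) ≤ m ∧ m ≤ M) {n : ℕ} (hn : 1 ≤ n) :
    ∑ j ∈ Jn n, |cstN p τ n m j - Real.exp (-(τ * |(m:ℝ)| ^ p) / 2)|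
      ≤ C0 p τ M * ((2:ℝ)^n)^p := by
  classical
  set r : ℝ := Real.exp (-(τ * |(m:ℝ)| ^ p) / 2) with hr
  have hNp1 : 1 ≤ ((2:ℝ)^n)^p := by
    rw [show (1:ℝ) = 1 ^ p from (Real.one_rpow p).symm]
    exact Real.rpow_le_rpow zero_le_one (one_le_pow₀ (by norm_num)) hp.1.le
  have hK0 : (0:ℝ) < Real.exp (τ*(M:ℝ)^p/2) := Real.exp_pos _
  have hM0 : (0:ℝ) ≤ (M:ℝ) := by positivity
  have hterm1 : ∀ j : ℤ, |cstN p τ n m j - r| ≤ 1 := by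
    intro j
    have hc0 : 0 ≤ cstN p τ n m j := by
      rw [cstN]; split
      · exact (Real.exp_pos _).le
      · exact le_refl 0
    have hc1 : cstN p τ n m j ≤ 1 := by
      rw [cstN]; split
      · apply Real.exp_le_one_iff.mpr
        have hs := w_subadd hp.1.le hp.2.le m j
        unfold w at hs
        nlinarith [mul_nonneg hτ.le (sub_nonneg.mpr hs)]
      · norm_num
    have hr1 : r ≤ 1 := by
      rw [hr]; apply Real.exp_le_one_iff.mpr
      have : (0:ℝ) ≤ τ * |(m:ℝ)|^p := by positivity
      linarith
    have hr0 : (0:ℝ) < r := Real.exp_pos _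
    rw [abs_sub_le_iff]; constructor <;> linarith
  have hC0aux : 0 ≤ 2*τ*Real.exp (τ*(M:ℝ)^p/2)*M := by positivity
  rcases le_or_gt ((2:ℤ)^(n-1)) (2*M+2) with hsmall | hbig
  · -- crude case: N is small
    have hb := Finset.sum_le_card_nsmul (Jn n) (fun j => |cstN p τ n m j - r|) 1
      (fun j _ => hterm1 j)
    rw [card_Jn hn, nsmul_eq_mul, mul_one] at hb
    have hsmall' : (2:ℝ)^(n-1) ≤ 2*M+2 := by exact_mod_cast hsmall
    have hcard : ((2^n : ℕ):ℝ) ≤ 4*M+4 := by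
      push_cast
      rw [real_two_pow_eq hn]
      linarith
    calc ∑ j ∈ Jn n, |cstN p τ n m j - r| ≤ ((2^n : ℕ):ℝ) := hb
      _ ≤ 4*(M:ℝ)+4 := hcard
      _ ≤ C0 p τ M * ((2:ℝ)^n)^p := by
          unfold C0
          nlinarith [hNp1, hC0aux, hM0]
  · -- fine case
    have hbig' : 2*(M:ℤ) + 3 ≤ 2^(n-1) := by omega
    rw [← Finset.sum_filter_add_sum_filter_not (Jn n) (fun j => m + j ∈ Jn n)]
    set E : ℝ := Real.exp (τ*(M:ℝ)^p/2) with hE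
    have hSb : ∑ j ∈ (Jn n).filter (fun j => ¬ (m + j ∈ Jn n)), |cstN p τ n m j - r|
        ≤ 2*(M:ℝ)+1 := by
      have h1 := Finset.sum_le_card_nsmul ((Jn n).filter (fun j => ¬ (m + j ∈ Jn n)))
        (fun j => |cstN p τ n m j - r|) 1 (fun j _ => hterm1 j)
      rw [nsmul_eq_mul, mul_one] at h1
      have h2 := card_S hm hn
      calc ∑ j ∈ (Jn n).filter (fun j => ¬ (m + j ∈ Jn n)), |cstN p τ n m j - r|
          ≤ (((Jn n).filter (fun j => ¬ (m + j ∈ Jn n))).card : ℝ) := h1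
        _ ≤ ((2*M+1 : ℕ) : ℝ) := by exact_mod_cast h2
        _ = 2*(M:ℝ)+1 := by push_cast; ring
    have hB0 : ∀ j : ℤ, 0 ≤ w p (|j| + M) - w p ((|j| - M) ⊔ 0) := by
      intro j
      have h := g_le_B hp (M := M) (m := 0) (by omega) j
      rw [zero_add] at h
      calc (0:ℝ) = |w p j - w p j| := by simp
        _ ≤ _ := h
    have hTb : ∑ j ∈ (Jn n).filter (fun j => m + j ∈ Jn n), |cstN p τ n m j - r|
        ≤ E * (τ/2) * (4*M*((2:ℝ)^n)^p) := by
      calc ∑ j ∈ (Jn n).filter (fun j => m + j ∈ Jn n), |cstN p τ n m j - r|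
          ≤ ∑ j ∈ (Jn n).filter (fun j => m + j ∈ Jn n),
              E * (τ/2 * (w p (|j| + M) - w p ((|j| - M) ⊔ 0))) := by
            apply Finset.sum_le_sum
            intro j hj
            have hmem := (Finset.mem_filter.mp hj).2
            refine (cst_sub_le hp hτ hm hmem).trans ?_
            have := g_le_B hp hm j
            gcongr
        _ ≤ ∑ j ∈ Jn n, E * (τ/2 * (w p (|j| + M) - w p ((|j| - M) ⊔ 0))) := by
            apply Finset.sum_le_sum_of_subset_of_nonneg (Finset.filter_subset _ _)
            intro i _ _
            have := hB0 i
            positivity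
        _ = E * (τ/2) * ∑ j ∈ Jn n, (w p (|j| + M) - w p ((|j| - M) ⊔ 0)) := by
            rw [Finset.mul_sum]
            apply Finset.sum_congr rfl
            intro j _
            ring
        _ ≤ E * (τ/2) * (4*M*((2:ℝ)^n)^p) := by
            have hs := sum_B_bound hp M hn hbig'
            have : (0:ℝ) ≤ E * (τ/2) := by positivity
            exact mul_le_mul_of_nonneg_left hs this
    have hfin : E * (τ/2) * (4*M*((2:ℝ)^n)^p) = 2*τ*E*M*((2:ℝ)^n)^p := by ring
    rw [hfin] at hTb
    unfold C0
    rw [← hE]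
    nlinarith [hNp1, hK0, hM0, hτ, mul_nonneg (mul_nonneg (mul_nonneg (by norm_num : (0:ℝ) ≤ 2) hτ.le) hK0.le) hM0]

lemma Atilde_sub_psi {p τ : ℝ} (hp : p ∈ Set.Ioo (0:ℝ) 1) (hτ : 0 < τ) (M : ℕ) {m : ℤ}
    (hm : -(M:ℤ) ≤ m ∧ m ≤ M) {n : ℕ} (hn : 1 ≤ n) {k l : ℕ}
    (hk : k < 2 ^ n) (hl : l < 2 ^ n) :
    ‖Atilde p τ n m k l
        - psi p τ m (2 * Real.pi * l / 2 ^ n) * (if k = l then 1 else 0)‖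
      ≤ C0 p τ M / ((2:ℝ)^n) ^ (1 - p) := by
  classical
  set r : ℝ := Real.exp (-(τ * |(m:ℝ)| ^ p) / 2) with hr
  have hN0 : ((2:ℂ)^n) ≠ 0 := pow_ne_zero n two_ne_zero
  have hNR : (0:ℝ) < (2:ℝ)^n := by positivity
  set d : ℤ := (k:ℤ) - (l:ℤ) with hd
  -- the identity for the delta term
  have hid : psi p τ m (2 * Real.pi * l / 2 ^ n) * (if k = l then 1 else 0)
      = (1 / (2 ^ n : ℂ)) * ∑ j ∈ Jn n,
          Complex.exp (2 * (Real.pi : ℂ) * Complex.I *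
            ((d * oIdx n j + (k : ℤ) * m : ℤ) : ℂ) / (2 ^ n : ℂ)) * (r:ℂ) := by
    by_cases hkl : k = l
    · subst hkl
      have hd0 : d = 0 := by rw [hd]; ring
      have hconst : ∀ j ∈ Jn n,
          Complex.exp (2 * (Real.pi : ℂ) * Complex.I *
            ((d * oIdx n j + (k : ℤ) * m : ℤ) : ℂ) / (2 ^ n : ℂ)) * (r:ℂ)
          = Complex.exp (2 * (Real.pi : ℂ) * Complex.I *
            (((k : ℤ) * m : ℤ) : ℂ) / (2 ^ n : ℂ)) * (r:ℂ) := by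
        intro j _
        rw [hd0]
        norm_num
      rw [Finset.sum_congr rfl hconst, Finset.sum_const, card_Jn hn, nsmul_eq_mul,
        if_pos rfl, mul_one, psi, ← hr]
      have hexp : Complex.I * (m:ℂ) * ((2 * Real.pi * (k:ℝ) / 2^n : ℝ) : ℂ)
          = 2 * (Real.pi:ℂ) * Complex.I * (((k:ℤ) * m : ℤ):ℂ) / (2^n:ℂ) := by
        push_cast
        ring
      rw [hexp, show ((2^n : ℕ) : ℂ) = (2:ℂ)^n by push_cast; ring]
      field_simp
    · rw [if_neg hkl, mul_zero]
      have hsplit : ∀ j ∈ Jn n,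
          Complex.exp (2 * (Real.pi : ℂ) * Complex.I *
            ((d * oIdx n j + (k : ℤ) * m : ℤ) : ℂ) / (2 ^ n : ℂ)) * (r:ℂ)
          = (Complex.exp (2 * (Real.pi : ℂ) * Complex.I *
              (((k : ℤ) * m : ℤ) : ℂ) / (2 ^ n : ℂ)) * (r:ℂ)) *
            Complex.exp (2 * (Real.pi:ℂ) * Complex.I * (d:ℂ) * ((oIdx n j : ℤ):ℂ) / (2:ℂ) ^ n) := by
        intro j _
        rw [mul_comm _ (Complex.exp (2 * (Real.pi:ℂ) * Complex.I * (d:ℂ) * ((oIdx n j : ℤ):ℂ) / (2:ℂ) ^ n)),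
          ← mul_assoc]
        congr 1
        rw [mul_comm, ← Complex.exp_add]
        congr 1
        push_cast
        ring
      rw [Finset.sum_congr rfl hsplit, ← Finset.mul_sum]
      have hdne : d ≠ 0 := by
        rw [hd]
        intro hc
        apply hkl
        omega
      have hdlt : |d| < 2^n := by
        have hkz : (k:ℤ) < 2^n := by exact_mod_cast hk
        have hlz : (l:ℤ) < 2^n := by exact_mod_cast hl
        rw [hd, abs_sub_lt_iff]
        omega
      rw [dft_zero hn hdne hdlt]
      ring
  -- rewrite the difference
  have hdiff : Atilde p τ n m k l
      - psi p τ m (2 * Real.pi * l / 2 ^ n) * (if k = l then 1 else 0)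
      = (1 / (2 ^ n : ℂ)) * ∑ j ∈ Jn n,
          Complex.exp (2 * (Real.pi : ℂ) * Complex.I *
            ((d * oIdx n j + (k : ℤ) * m : ℤ) : ℂ) / (2 ^ n : ℂ)) *
          (((cstN p τ n m j : ℝ) - r : ℝ) : ℂ) := by
    rw [Atilde, hid, ← mul_sub, ← Finset.sum_sub_distrib]
    congr 1
    apply Finset.sum_congr rfl
    intro j _
    rw [← hd]
    push_cast
    ring
  rw [hdiff]
  -- bound the absolute value
  have habs : ‖(1 / (2 ^ n : ℂ)) * ∑ j ∈ Jn n,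
          Complex.exp (2 * (Real.pi : ℂ) * Complex.I *
            ((d * oIdx n j + (k : ℤ) * m : ℤ) : ℂ) / (2 ^ n : ℂ)) *
          (((cstN p τ n m j : ℝ) - r : ℝ) : ℂ)‖
      ≤ (1 / (2:ℝ)^n) * ∑ j ∈ Jn n, |cstN p τ n m j - r| := by
    rw [norm_mul]
    have h1 : ‖(1 / (2 ^ n : ℂ))‖ = 1 / (2:ℝ)^n := by
      rw [norm_div, norm_one, norm_pow]
      norm_num
    rw [h1]
    apply mul_le_mul_of_nonneg_left _ (by positivity)
    refine (norm_sum_le _ _).trans ?_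
    apply Finset.sum_le_sum
    intro j _
    rw [norm_mul, Complex.norm_real, Real.norm_eq_abs]
    have he : 2 * (Real.pi : ℂ) * Complex.I *
          ((d * oIdx n j + (k : ℤ) * m : ℤ) : ℂ) / (2 ^ n : ℂ)
        = ((2 * Real.pi * ((d * oIdx n j + (k : ℤ) * m : ℤ) : ℝ) / (2:ℝ)^n : ℝ) : ℂ)
            * Complex.I := by
      push_cast
      ring
    rw [he, Complex.norm_exp_ofReal_mul_I, one_mul]
  refine habs.trans ?_
  have hsum := sum_cst_bound hp hτ M hm hn
  calc (1 / (2:ℝ)^n) * ∑ j ∈ Jn n, |cstN p τ n m j - r|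
      ≤ (1 / (2:ℝ)^n) * (C0 p τ M * ((2:ℝ)^n)^p) :=
        mul_le_mul_of_nonneg_left hsum (by positivity)
    _ = C0 p τ M / ((2:ℝ)^n) ^ (1 - p) := by
        rw [eq_div_iff (ne_of_gt (Real.rpow_pos_of_pos hNR (1-p)))]
        calc (1 / (2:ℝ)^n) * (C0 p τ M * ((2:ℝ)^n)^p) * ((2:ℝ)^n)^(1-p)
            = C0 p τ M * (((2:ℝ)^n)^p * ((2:ℝ)^n)^(1-p)) / (2:ℝ)^n := by ring
          _ = C0 p τ M := by
              rw [← Real.rpow_add hNR, show p + (1-p) = 1 by ring, Real.rpow_one]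
              field_simp

/-- For every `p ∈ (0,1)`, `τ > 0` and integer `M ≥ 0` there exists a constant
`C_{p,τ,M} > 0` such that, for every bandlimited observable `f = Σ_{|m|≤M} f̃_m ψ_m`, all `n ≥ 1`
and all `k, l ∈ {0,…,N−1}`,
`|Σ_m f̃_m (Ã_{m,n})_{kl} − f(θ_l) δ_{kl}| ≤ (C_{p,τ,M}/N^{1−p}) (Σ_m |f̃_m|²)^{1/2}`. -/
theorem bandlimited_residual_bound (p τ : ℝ) (hp : p ∈ Set.Ioo (0 : ℝ) 1) (hτ : 0 < τ)
    (M : ℕ) :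
    ∃ C : ℝ, 0 < C ∧
      ∀ (ft : ℤ → ℂ) (n : ℕ), 1 ≤ n → ∀ (k l : ℕ), k < 2 ^ n → l < 2 ^ n →
        ‖(∑ m ∈ Finset.Icc (-(M : ℤ)) (M : ℤ), ft m * Atilde p τ n m k l)
            - (∑ m ∈ Finset.Icc (-(M : ℤ)) (M : ℤ),
                ft m * psi p τ m (2 * Real.pi * l / 2 ^ n)) * (if k = l then 1 else 0)‖
          ≤ C / ((2 ^ n : ℝ)) ^ (1 - p)
              * Real.sqrt (∑ m ∈ Finset.Icc (-(M : ℤ)) (M : ℤ), (‖ft m‖) ^ 2) := by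
  refine ⟨(2*(M:ℝ)+1) * C0 p τ M,
    mul_pos (by positivity) (C0_pos hτ M), ?_⟩
  intro ft n hn k l hk hl
  set I : Finset ℤ := Finset.Icc (-(M : ℤ)) (M : ℤ) with hI
  set S : ℝ := Real.sqrt (∑ m ∈ I, (‖ft m‖) ^ 2) with hS
  have hS0 : 0 ≤ S := Real.sqrt_nonneg _
  have hNp : (0:ℝ) < ((2:ℝ)^n) ^ (1-p) := Real.rpow_pos_of_pos (by positivity) _
  have hC0 := C0_pos (p := p) hτ M
  -- rewrite as a single sum
  have hsplit : (∑ m ∈ I, ft m * Atilde p τ n m k l)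
      - (∑ m ∈ I, ft m * psi p τ m (2 * Real.pi * l / 2 ^ n)) * (if k = l then 1 else 0)
      = ∑ m ∈ I, ft m * (Atilde p τ n m k l
          - psi p τ m (2 * Real.pi * l / 2 ^ n) * (if k = l then 1 else 0)) := by
    rw [Finset.sum_mul, ← Finset.sum_sub_distrib]
    apply Finset.sum_congr rfl
    intro m _
    ring
  rw [hsplit]
  -- each coefficient is at most S
  have hcoef : ∀ m ∈ I, ‖ft m‖ ≤ S := by
    intro m hm
    rw [hS]
    rw [show ‖ft m‖ = Real.sqrt ((‖ft m‖)^2) by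
      rw [Real.sqrt_sq (norm_nonneg _)]]
    apply Real.sqrt_le_sqrt
    apply Finset.single_le_sum (f := fun m => (‖ft m‖)^2) _ hm
    intro i _
    positivity
  have hmain : ‖∑ m ∈ I, ft m * (Atilde p τ n m k l
        - psi p τ m (2 * Real.pi * l / 2 ^ n) * (if k = l then 1 else 0))‖
      ≤ ∑ m ∈ I, S * (C0 p τ M / ((2:ℝ)^n) ^ (1-p)) := by
    refine (norm_sum_le _ _).trans ?_
    apply Finset.sum_le_sum
    intro m hm
    rw [norm_mul]
    have hmm : -(M:ℤ) ≤ m ∧ m ≤ M := by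
      rw [hI] at hm
      exact Finset.mem_Icc.mp hm
    exact mul_le_mul (hcoef m hm) (Atilde_sub_psi hp hτ M hmm hn hk hl)
      (norm_nonneg _) hS0
  refine hmain.trans ?_
  rw [Finset.sum_const, nsmul_eq_mul]
  have hcard : ((I.card : ℕ) : ℝ) = 2*(M:ℝ)+1 := by
    rw [hI, Int.card_Icc]
    have : ((M:ℤ) + 1 - -(M:ℤ)).toNat = 2*M+1 := by omega
    rw [this]
    push_cast
    ring
  rw [hcard]
  rw [show (2*(M:ℝ)+1) * C0 p τ M / ((2:ℝ)^n) ^ (1-p) * S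
      = (2*(M:ℝ)+1) * (S * (C0 p τ M / ((2:ℝ)^n) ^ (1-p))) from by ring]

end QECD
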